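/- arXiv:2205.04289 — 2 statements merged into one kernel-verified Lean document; each statement's English description precedes it below -/
import Mathlib

section
/- Componentwise majorization (Condition 1 for the proposed surrogate): Fix a row vector B_i ∈ ℝ^{1×m}, a symmetric matrix D^(i) ∈ ℝ^{m×m}, and a scalar b̂_i ∈ ℝ. For w ∈ ℝ^m set g_i := B_i w + wᵀ D^(i) w − b̂_i and h_i := B_i + 2 wᵀ D^(i), and define φ_i(u) := (B_i u + uᵀ D^(i) u − b̂_i)² and ψ_i(v) := g_i² + 2 g_i ∑_{j=1}^m h_{ij} v_j + 2 (g_i λ_M(D^(i), g_i) + ‖h_i‖²) ∑_{j=1}^m v_j² + 2 m σ(D^(i))² ∑_{j=1}^m v_j⁴. Then φ_i(w + v) ≤ ψ_i(v) for every v ∈ ℝ^m. -/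
/-- The smallest eigenvalue of a real symmetric (Hermitian) matrix. -/
noncomputable def lamMin {m : ℕ} {D : Matrix (Fin m) (Fin m) ℝ} (hD : D.IsHermitian) : ℝ :=
  ⨅ i, hD.eigenvalues i

/-- The largest eigenvalue of a real symmetric (Hermitian) matrix. -/
noncomputable def lamMax {m : ℕ} {D : Matrix (Fin m) (Fin m) ℝ} (hD : D.IsHermitian) : ℝ :=
  ⨆ i, hD.eigenvalues i

/-- `λ_M(D, g)`: the smallest eigenvalue if `g < 0`, the largest if `g ≥ 0`. -/
noncomputable def lamM {m : ℕ} {D : Matrix (Fin m) (Fin m) ℝ} (hD : D.IsHermitian)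
    (g : ℝ) : ℝ :=
  if g < 0 then lamMin hD else lamMax hD

/-- `σ(D)`: the largest singular value of `D`, i.e. the operator norm of `D`
with respect to the Euclidean norm. -/
noncomputable def sigmaOp {m : ℕ} (D : Matrix (Fin m) (Fin m) ℝ) : ℝ :=
  ‖Matrix.toEuclideanCLM (𝕜 := ℝ) D‖

section aux
open Matrix in
/-- quadratic form in eigencoordinates -/
lemma qform_eq {m : ℕ} (D : Matrix (Fin m) (Fin m) ℝ) (hD : D.IsHermitian)
    (v : EuclideanSpace ℝ (Fin m)) :
    dotProduct (v : Fin m → ℝ) (D.mulVec v) =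
      ∑ i, hD.eigenvalues i * (dotProduct (hD.eigenvectorBasis i : Fin m → ℝ) v) ^ 2 := by
  have hsymm : Matrix.transpose D = D := by
    ext i j
    have := congrFun (congrFun hD i) j
    simpa using this
  set b := hD.eigenvectorBasis
  set u : EuclideanSpace ℝ (Fin m) := (WithLp.equiv 2 (Fin m → ℝ)).symm (D.mulVec v) with hu
  have hinner : ∀ (x y : EuclideanSpace ℝ (Fin m)),
      inner ℝ x y = dotProduct (x : Fin m → ℝ) y := by
    intro x y
    simp [PiLp.inner_apply, RCLike.inner_apply, dotProduct, mul_comm]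
  have key := OrthonormalBasis.sum_inner_mul_inner b v u
  have hbu : ∀ i, inner ℝ (b i) u = hD.eigenvalues i * dotProduct (b i : Fin m → ℝ) v := by
    intro i
    rw [hinner]
    have : dotProduct (b i : Fin m → ℝ) (D.mulVec v)
        = dotProduct (D.mulVec (b i)) v := by
      rw [dotProduct_mulVec, ← mulVec_transpose, hsymm]
    rw [hu]
    show dotProduct (b i : Fin m → ℝ) (D.mulVec v) = _
    have h2 : D *ᵥ (b i : Fin m → ℝ) = hD.eigenvalues i • (b i : Fin m → ℝ) :=
      hD.mulVec_eigenvectorBasis i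
    rw [this, h2, smul_dotProduct]
    rfl
  have hvu : inner ℝ v u = dotProduct (v : Fin m → ℝ) (D.mulVec v) := by
    rw [hinner]; rfl
  rw [← hvu, ← key]
  refine Finset.sum_congr rfl fun i _ => ?_
  rw [hbu i, hinner, dotProduct_comm]
  ring

open Matrix in
lemma sum_sq_coords {m : ℕ} (D : Matrix (Fin m) (Fin m) ℝ) (hD : D.IsHermitian)
    (v : EuclideanSpace ℝ (Fin m)) :
    ∑ i, (dotProduct (hD.eigenvectorBasis i : Fin m → ℝ) v) ^ 2 = ‖v‖ ^ 2 := by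
  have hinner : ∀ (x y : EuclideanSpace ℝ (Fin m)),
      inner ℝ x y = dotProduct (x : Fin m → ℝ) y := by
    intro x y
    simp [PiLp.inner_apply, RCLike.inner_apply, dotProduct, mul_comm]
  have key := OrthonormalBasis.sum_inner_mul_inner hD.eigenvectorBasis v v
  rw [real_inner_self_eq_norm_sq] at key
  rw [← key]
  refine Finset.sum_congr rfl fun i _ => ?_
  rw [hinner, hinner, dotProduct_comm (v : Fin m → ℝ)]
  ring

open Matrix in
lemma qform_abs_le {m : ℕ} (D : Matrix (Fin m) (Fin m) ℝ)
    (v : EuclideanSpace ℝ (Fin m)) :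
    |dotProduct (v : Fin m → ℝ) (D.mulVec v)| ≤ sigmaOp D * ‖v‖ ^ 2 := by
  set T := Matrix.toEuclideanCLM (𝕜 := ℝ) D
  have hTv : (T v : Fin m → ℝ) = D.mulVec v := by
    rfl
  calc |dotProduct (v : Fin m → ℝ) (D.mulVec v)| = |inner ℝ v (T v)| := by
        rw [show inner ℝ v (T v) = dotProduct (v : Fin m → ℝ) (T v : Fin m → ℝ) by
          simp [PiLp.inner_apply, RCLike.inner_apply, dotProduct, mul_comm], hTv]
    _ ≤ ‖v‖ * ‖T v‖ := abs_real_inner_le_norm v (T v)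
    _ ≤ ‖v‖ * (‖T‖ * ‖v‖) := by
        have := T.le_opNorm v
        nlinarith [norm_nonneg v]
    _ = sigmaOp D * ‖v‖ ^ 2 := by rw [sigmaOp]; ring
end aux

open Matrix in
lemma qform_g_le {m : ℕ} (D : Matrix (Fin m) (Fin m) ℝ) (hD : D.IsHermitian) (g : ℝ)
    (v : EuclideanSpace ℝ (Fin m)) :
    g * dotProduct (v : Fin m → ℝ) (D.mulVec v) ≤ g * lamM hD g * ‖v‖ ^ 2 := by
  rw [qform_eq D hD v]
  set c := fun i => dotProduct (hD.eigenvectorBasis i : Fin m → ℝ) v with hcdef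
  have hc : ∑ i, c i ^ 2 = ‖v‖ ^ 2 := sum_sq_coords D hD v
  by_cases hg : g < 0
  · rw [lamM, if_pos hg]
    have hlow : lamMin hD * ‖v‖ ^ 2 ≤ ∑ i, hD.eigenvalues i * c i ^ 2 := by
      rw [← hc, Finset.mul_sum]
      refine Finset.sum_le_sum fun i _ => ?_
      have : lamMin hD ≤ hD.eigenvalues i :=
        ciInf_le (Set.Finite.bddBelow (Set.finite_range _)) i
      nlinarith [sq_nonneg (c i)]
    nlinarith
  · rw [lamM, if_neg hg]
    push_neg at hg
    have hup : ∑ i, hD.eigenvalues i * c i ^ 2 ≤ lamMax hD * ‖v‖ ^ 2 := by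
      rw [← hc, Finset.mul_sum]
      refine Finset.sum_le_sum fun i _ => ?_
      have : hD.eigenvalues i ≤ lamMax hD :=
        le_ciSup (Set.Finite.bddAbove (Set.finite_range _)) i
      nlinarith [sq_nonneg (c i)]
    nlinarith


/-- Componentwise majorization (Condition 1 for the proposed surrogate). -/
theorem componentwise_majorization {m : ℕ} (B : Fin m → ℝ)
    (D : Matrix (Fin m) (Fin m) ℝ) (hD : D.IsHermitian) (bhat : ℝ)
    (w v : EuclideanSpace ℝ (Fin m)) :
    let g : ℝ := dotProduct B w + dotProduct w (D.mulVec w) - bhat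
    let h : EuclideanSpace ℝ (Fin m) := WithLp.toLp 2 (fun j => B j + 2 * Matrix.vecMul w D j : Fin m → ℝ)
    let φ : EuclideanSpace ℝ (Fin m) → ℝ := fun u =>
      (dotProduct B u + dotProduct u (D.mulVec u) - bhat) ^ 2
    let ψ : EuclideanSpace ℝ (Fin m) → ℝ := fun u =>
      g ^ 2 + 2 * g * ∑ j, h j * u j
        + 2 * (g * lamM hD g + ‖h‖ ^ 2) * ∑ j, u j ^ 2
        + 2 * m * sigmaOp D ^ 2 * ∑ j, u j ^ 4
    φ (w + v) ≤ ψ v := by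
  intro g h φ ψ
  have hsymm : Matrix.transpose D = D := by
    ext i j
    have := congrFun (congrFun hD i) j
    simpa using this
  have hsym : ∀ x y : Fin m → ℝ,
      dotProduct x (D.mulVec y) = dotProduct y (D.mulVec x) := by
    intro x y
    rw [Matrix.dotProduct_mulVec, ← Matrix.mulVec_transpose, hsymm, dotProduct_comm]
  set s : ℝ := ∑ j, h j * v j with hsdef
  set q : ℝ := dotProduct (v : Fin m → ℝ) (D.mulVec v) with hqdef
  -- expansion
  have hadd : ((w + v : EuclideanSpace ℝ (Fin m)) : Fin m → ℝ)
      = (w : Fin m → ℝ) + (v : Fin m → ℝ) := rfl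
  have hs : s = dotProduct B v + 2 * dotProduct (w : Fin m → ℝ) (D.mulVec v) := by
    rw [hsdef]
    have : ∀ j, h j = B j + 2 * Matrix.vecMul (w : Fin m → ℝ) D j := fun j => rfl
    calc (∑ j, h j * v j) = ∑ j, (B j * v j + 2 * (Matrix.vecMul (w : Fin m → ℝ) D j * v j)) := by
          refine Finset.sum_congr rfl fun j _ => ?_
          rw [this j]; ring
      _ = _ := by
          rw [Finset.sum_add_distrib, ← Finset.mul_sum, Matrix.dotProduct_mulVec]
          rfl
  have hexp : dotProduct B ((w + v : EuclideanSpace ℝ (Fin m)) : Fin m → ℝ)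
      + dotProduct ((w + v : EuclideanSpace ℝ (Fin m)) : Fin m → ℝ)
        (D.mulVec ((w + v : EuclideanSpace ℝ (Fin m)) : Fin m → ℝ)) - bhat
      = g + s + q := by
    rw [hadd, dotProduct_add, add_dotProduct, Matrix.mulVec_add,
      dotProduct_add, dotProduct_add, hs, hqdef]
    simp only [g]
    rw [hsym (v : Fin m → ℝ) (w : Fin m → ℝ)]
    ring
  have hφ : φ (w + v) = (g + s + q) ^ 2 := by simp only [φ]; rw [hexp]
  -- norms as sums
  have hv2 : ‖v‖ ^ 2 = ∑ j, v j ^ 2 := by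
    rw [EuclideanSpace.norm_eq, Real.sq_sqrt (Finset.sum_nonneg fun j _ => sq_nonneg _)]
    simp [Real.norm_eq_abs, sq_abs]
  have hh2 : ‖h‖ ^ 2 = ∑ j, h j ^ 2 := by
    rw [EuclideanSpace.norm_eq, Real.sq_sqrt (Finset.sum_nonneg fun j _ => sq_nonneg _)]
    simp [Real.norm_eq_abs, sq_abs]
  -- key bounds
  have hq : g * q ≤ g * lamM hD g * ∑ j, v j ^ 2 := by
    rw [← hv2]; exact qform_g_le D hD g v
  have hCS : s ^ 2 ≤ (∑ j, h j ^ 2) * ∑ j, v j ^ 2 := by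
    rw [hsdef]
    exact Finset.sum_mul_sq_le_sq_mul_sq Finset.univ (fun j => h j) (fun j => v j)
  have hcard : (∑ j, v j ^ 2) ^ 2 ≤ m * ∑ j, v j ^ 4 := by
    have := sq_sum_le_card_mul_sum_sq (s := (Finset.univ : Finset (Fin m)))
      (f := fun j => v j ^ 2)
    simpa [← pow_mul] using this
  have hsig : |q| ≤ sigmaOp D * ∑ j, v j ^ 2 := by
    rw [← hv2]; exact qform_abs_le D v
  have hq2 : q ^ 2 ≤ sigmaOp D ^ 2 * (m * ∑ j, v j ^ 4) := by
    have h1 : q ^ 2 ≤ (sigmaOp D * ∑ j, v j ^ 2) ^ 2 := by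
      rw [← sq_abs q]
      exact pow_le_pow_left₀ (abs_nonneg q) hsig 2
    have h2 : (sigmaOp D * ∑ j, v j ^ 2) ^ 2 = sigmaOp D ^ 2 * (∑ j, v j ^ 2) ^ 2 := by ring
    nlinarith [sq_nonneg (sigmaOp D)]
  have hψ : ψ v = g ^ 2 + 2 * g * s
      + 2 * (g * lamM hD g + ‖h‖ ^ 2) * ∑ j, v j ^ 2
      + 2 * m * sigmaOp D ^ 2 * ∑ j, v j ^ 4 := rfl
  rw [hφ, hψ, hh2]
  nlinarith [sq_nonneg (s - q), sq_nonneg (s + q), hq, hCS, hq2]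
end

section
/- Proposition 2 (the proposed surrogate is a valid majorizer): Let B ∈ ℝ^{3n×m} with rows B_i, let D^(1), …, D^(3n) ∈ ℝ^{m×m} be symmetric matrices, let b̂ ∈ ℝ^{3n}, and let α ≥ 0. Define the objective F(u) := ∑_{i=1}^{3n} (B_i u + uᵀ D^(i) u − b̂_i)² + α ∑_{j=1}^m u_j. Fix w ∈ [0,1]^m, set g_i := B_i w + wᵀ D^(i) w − b̂_i and h_i := B_i + 2 wᵀ D^(i), define ψ_i(v) := g_i² + 2 g_i ∑_{j=1}^m h_{ij} v_j + 2 (g_i λ_M(D^(i), g_i) + ‖h_i‖²) ∑_{j=1}^m v_j² + 2 m σ(D^(i))² ∑_{j=1}^m v_j⁴, and define ψ(v) := ∑_{i=1}^{3n} ψ_i(v) + α ∑_{j=1}^m (w_j + v_j). Then (Condition 1) F(w + v) ≤ ψ(v) for every v ∈ ℝ^m with 0 ≤ w + v ≤ 1, and (Condition 2) ψ(0) = F(w). -/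
section AuxLemmas

open Matrix
open scoped RealInnerProductSpace

variable {m : ℕ} {D : Matrix (Fin m) (Fin m) ℝ}

private lemma aux_star_mulVec (hD : D.IsHermitian) (v : Fin m → ℝ) :
    (star (hD.eigenvectorUnitary : Matrix (Fin m) (Fin m) ℝ)) *ᵥ v =
      v ᵥ* (hD.eigenvectorUnitary : Matrix (Fin m) (Fin m) ℝ) := by
  ext k
  simp [Matrix.mulVec, Matrix.vecMul, dotProduct, mul_comm]

private lemma aux_quad_repr (hD : D.IsHermitian) (v : Fin m → ℝ) :
    v ⬝ᵥ (D *ᵥ v) =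
      ∑ k, hD.eigenvalues k *
        (v ᵥ* (hD.eigenvectorUnitary : Matrix (Fin m) (Fin m) ℝ)) k ^ 2 := by
  conv_lhs => rw [hD.spectral_theorem, Unitary.conjStarAlgAut_apply]
  rw [← Matrix.mulVec_mulVec, ← Matrix.mulVec_mulVec, Matrix.dotProduct_mulVec,
    aux_star_mulVec]
  simp only [dotProduct, Matrix.mulVec_diagonal, Function.comp]
  refine Finset.sum_congr rfl fun k _ => ?_
  simp only [RCLike.ofReal_real_eq_id, id]
  ring

private lemma aux_quad_norm_pres (hD : D.IsHermitian) (v : Fin m → ℝ) :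
    ∑ k, (v ᵥ* (hD.eigenvectorUnitary : Matrix (Fin m) (Fin m) ℝ)) k ^ 2 = v ⬝ᵥ v := by
  have h1 : (hD.eigenvectorUnitary : Matrix (Fin m) (Fin m) ℝ) *
      star (hD.eigenvectorUnitary : Matrix (Fin m) (Fin m) ℝ) = 1 :=
    Matrix.mem_unitaryGroup_iff.mp hD.eigenvectorUnitary.2
  have h2 : ∑ k, (v ᵥ* (hD.eigenvectorUnitary : Matrix (Fin m) (Fin m) ℝ)) k ^ 2
      = (v ᵥ* (hD.eigenvectorUnitary : Matrix (Fin m) (Fin m) ℝ)) ⬝ᵥ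
        ((star (hD.eigenvectorUnitary : Matrix (Fin m) (Fin m) ℝ)) *ᵥ v) := by
    rw [aux_star_mulVec]
    simp [dotProduct, sq]
  rw [h2, ← Matrix.dotProduct_mulVec, Matrix.mulVec_mulVec, h1, Matrix.one_mulVec]

private lemma aux_quad_le_lamMax (hD : D.IsHermitian) (v : Fin m → ℝ) :
    v ⬝ᵥ (D *ᵥ v) ≤ lamMax hD * (v ⬝ᵥ v) := by
  rw [aux_quad_repr hD v, ← aux_quad_norm_pres hD v, Finset.mul_sum]
  refine Finset.sum_le_sum fun k _ => ?_
  have h1 : hD.eigenvalues k ≤ lamMax hD :=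
    le_ciSup (Set.Finite.bddAbove (Set.finite_range _)) k
  nlinarith [sq_nonneg ((v ᵥ* (hD.eigenvectorUnitary : Matrix (Fin m) (Fin m) ℝ)) k)]

private lemma aux_lamMin_le_quad (hD : D.IsHermitian) (v : Fin m → ℝ) :
    lamMin hD * (v ⬝ᵥ v) ≤ v ⬝ᵥ (D *ᵥ v) := by
  rw [aux_quad_repr hD v, ← aux_quad_norm_pres hD v, Finset.mul_sum]
  refine Finset.sum_le_sum fun k _ => ?_
  have h1 : lamMin hD ≤ hD.eigenvalues k :=
    ciInf_le (Set.Finite.bddBelow (Set.finite_range _)) k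
  nlinarith [sq_nonneg ((v ᵥ* (hD.eigenvectorUnitary : Matrix (Fin m) (Fin m) ℝ)) k)]

private lemma aux_norm_sq (x : EuclideanSpace ℝ (Fin m)) :
    ‖x‖ ^ 2 = ∑ j, x j ^ 2 := by
  rw [← real_inner_self_eq_norm_sq]
  simp only [PiLp.inner_apply, RCLike.inner_apply, conj_trivial, sq]

private lemma aux_clm_apply (D : Matrix (Fin m) (Fin m) ℝ) (v : EuclideanSpace ℝ (Fin m))
    (j : Fin m) :
    (Matrix.toEuclideanCLM (𝕜 := ℝ) D v) j = (D *ᵥ (v : Fin m → ℝ)) j :=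
  rfl

private lemma aux_sigma_bound (D : Matrix (Fin m) (Fin m) ℝ) (v : EuclideanSpace ℝ (Fin m)) :
    |(v : Fin m → ℝ) ⬝ᵥ (D *ᵥ (v : Fin m → ℝ))| ≤ sigmaOp D * ‖v‖ ^ 2 := by
  have h1 : (v : Fin m → ℝ) ⬝ᵥ (D *ᵥ (v : Fin m → ℝ)) =
      ⟪v, Matrix.toEuclideanCLM (𝕜 := ℝ) D v⟫ := by
    rw [PiLp.inner_apply]
    refine Finset.sum_congr rfl fun j _ => ?_
    rw [aux_clm_apply]
    simp [dotProduct, RCLike.inner_apply, mul_comm]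
  rw [h1]
  calc |⟪v, Matrix.toEuclideanCLM (𝕜 := ℝ) D v⟫|
      ≤ ‖v‖ * ‖Matrix.toEuclideanCLM (𝕜 := ℝ) D v‖ := abs_real_inner_le_norm _ _
    _ ≤ ‖v‖ * (sigmaOp D * ‖v‖) := by
        gcongr
        exact (Matrix.toEuclideanCLM (𝕜 := ℝ) D).le_opNorm v
    _ = sigmaOp D * ‖v‖ ^ 2 := by ring

end AuxLemmas

open Matrix

/-- Proposition 2: the proposed surrogate is a valid majorizer. -/
theorem surrogate_is_majorizer {n m : ℕ} (B : Matrix (Fin (3 * n)) (Fin m) ℝ)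
    (D : Fin (3 * n) → Matrix (Fin m) (Fin m) ℝ) (hD : ∀ i, (D i).IsHermitian)
    (bhat : Fin (3 * n) → ℝ) (α : ℝ) (hα : 0 ≤ α)
    (w : EuclideanSpace ℝ (Fin m)) (hw : ∀ j, 0 ≤ w j ∧ w j ≤ 1) :
    let F : EuclideanSpace ℝ (Fin m) → ℝ := fun u =>
      (∑ i, (dotProduct (B i) u + dotProduct u ((D i).mulVec u) - bhat i) ^ 2)
        + α * ∑ j, u j
    let g : Fin (3 * n) → ℝ := fun i =>
      dotProduct (B i) w + dotProduct w ((D i).mulVec w) - bhat i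
    let h : Fin (3 * n) → EuclideanSpace ℝ (Fin m) := fun i =>
      WithLp.toLp 2 (fun j => B i j + 2 * Matrix.vecMul w (D i) j : Fin m → ℝ)
    let ψ : EuclideanSpace ℝ (Fin m) → ℝ := fun v =>
      (∑ i, (g i ^ 2 + 2 * g i * ∑ j, h i j * v j
        + 2 * (g i * lamM (hD i) (g i) + ‖h i‖ ^ 2) * ∑ j, v j ^ 2
        + 2 * m * sigmaOp (D i) ^ 2 * ∑ j, v j ^ 4))
        + α * ∑ j, (w j + v j)
    (∀ v : EuclideanSpace ℝ (Fin m),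
      (∀ j, 0 ≤ w j + v j ∧ w j + v j ≤ 1) → F (w + v) ≤ ψ v) ∧
    ψ 0 = F w := by
  intro F g h ψ
  constructor
  · intro v _
    have hαeq : α * ∑ j, (w + v : EuclideanSpace ℝ (Fin m)) j = α * ∑ j, (w j + v j) := rfl
    simp only [F, ψ]
    rw [hαeq]
    refine add_le_add_left (Finset.sum_le_sum fun i _ => ?_) _
    set a : ℝ := ∑ j, h i j * v j with ha_def
    set q : ℝ := (v : Fin m → ℝ) ⬝ᵥ ((D i) *ᵥ (v : Fin m → ℝ)) with hq_def
    set S : ℝ := ∑ j, v j ^ 2 with hS_def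
    set Q : ℝ := ∑ j, v j ^ 4 with hQ_def
    have hDsym : (D i)ᵀ = D i := by
      ext j k; simpa using (hD i).apply j k
    have hsym : (v : Fin m → ℝ) ⬝ᵥ ((D i) *ᵥ (w : Fin m → ℝ))
        = (w : Fin m → ℝ) ⬝ᵥ ((D i) *ᵥ (v : Fin m → ℝ)) := by
      rw [Matrix.dotProduct_mulVec]
      conv_lhs => rw [← hDsym]
      rw [Matrix.vecMul_transpose, dotProduct_comm]
    have ha : a = dotProduct (B i) (v : Fin m → ℝ)
        + 2 * ((w : Fin m → ℝ) ⬝ᵥ ((D i) *ᵥ (v : Fin m → ℝ))) := by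
      rw [Matrix.dotProduct_mulVec, ha_def]
      simp only [h, dotProduct, Finset.mul_sum, add_mul]
      rw [Finset.sum_add_distrib]
      congr 1
      refine Finset.sum_congr rfl fun j _ => ?_
      ring
    have key : dotProduct (B i) ((w + v : EuclideanSpace ℝ (Fin m)) : Fin m → ℝ)
        + dotProduct ((w + v : EuclideanSpace ℝ (Fin m)) : Fin m → ℝ)
          ((D i).mulVec ((w + v : EuclideanSpace ℝ (Fin m)) : Fin m → ℝ)) - bhat i
        = g i + a + q := by
      have hwv : ((w + v : EuclideanSpace ℝ (Fin m)) : Fin m → ℝ)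
          = (w : Fin m → ℝ) + (v : Fin m → ℝ) := rfl
      rw [hwv, dotProduct_add, add_dotProduct, Matrix.mulVec_add,
        dotProduct_add, dotProduct_add]
      simp only [g]
      rw [ha, hsym]
      ring
    have hSv : S = (v : Fin m → ℝ) ⬝ᵥ (v : Fin m → ℝ) := by
      simp [dotProduct, hS_def, sq]
    have hnormv : ‖v‖ ^ 2 = S := (aux_norm_sq v).trans rfl
    -- fact 2 : g * q ≤ g * lamM * S
    have f2 : g i * q ≤ g i * (lamM (hD i) (g i) * S) := by
      rw [lamM]
      rcases lt_or_ge (g i) 0 with hg | hg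
      · rw [if_pos hg]
        have := aux_lamMin_le_quad (hD i) (v : Fin m → ℝ)
        rw [← hSv] at this
        exact mul_le_mul_of_nonpos_left this (le_of_lt hg)
      · rw [if_neg (not_lt.mpr hg)]
        have := aux_quad_le_lamMax (hD i) (v : Fin m → ℝ)
        rw [← hSv] at this
        exact mul_le_mul_of_nonneg_left this hg
    -- fact 3 : a^2 ≤ ‖h i‖^2 * S
    have f3 : a ^ 2 ≤ ‖h i‖ ^ 2 * S := by
      have hinner : (inner ℝ (h i) v : ℝ) = a := by
        simp [PiLp.inner_apply, RCLike.inner_apply, ha_def, mul_comm]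
      have := real_inner_mul_inner_self_le (h i) v
      rw [hinner, real_inner_self_eq_norm_sq, real_inner_self_eq_norm_sq, hnormv] at this
      nlinarith [this]
    -- fact 4 : q^2 ≤ σ^2 * S^2
    have f4 : q ^ 2 ≤ sigmaOp (D i) ^ 2 * S ^ 2 := by
      have := aux_sigma_bound (D i) v
      rw [hnormv, ← hq_def] at this
      nlinarith [abs_nonneg q, sq_abs q, this]
    -- fact 5 : S^2 ≤ m * Q
    have f5 : S ^ 2 ≤ (m : ℝ) * Q := by
      have := sq_sum_le_card_mul_sum_sq (s := (Finset.univ : Finset (Fin m)))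
        (f := fun j => v j ^ 2)
      simp only [Finset.card_univ, Fintype.card_fin] at this
      calc S ^ 2 ≤ (m : ℝ) * ∑ j, (v j ^ 2) ^ 2 := this
        _ = (m : ℝ) * Q := by
            rw [hQ_def]
            congr 1
            exact Finset.sum_congr rfl fun j _ => by ring
    have f6 : q ^ 2 ≤ (m : ℝ) * sigmaOp (D i) ^ 2 * Q := by
      nlinarith [f4, f5, sq_nonneg (sigmaOp (D i))]
    rw [key]
    nlinarith [f2, f3, f6, sq_nonneg (a - q)]
  · simp only [F, ψ, g]
    simp
end
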